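/- Let H be a finite-dimensional complex Hilbert space, 𝒱 a subgroup of the unitary group of H, and X_1, …, X_n skewadjoint operators on H such that exp(c_1 X_1 + ⋯ + c_n X_n) ∈ 𝒱 for all real numbers c_1, …, c_n. Then for all real numbers b^1, …, b^n and every positive semidefinite symmetric real n×n matrix [a^{jk}], the linear map 𝔊 : End(H) → End(H) defined by 𝔊(A) = Σ_{j=1}^{n} b^j (X_j A − A X_j) + Σ_{j,k=1}^{n} a^{jk} (X_j X_k A + A X_j X_k − 2 X_j A X_k) belongs to C(𝒱), the closure of the convex cone generated by {(A ↦ V A V* − A) : V ∈ 𝒱} in the space of linear maps on End(H). -/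

import Mathlib

/-- Conjugation `A ↦ V A V*` by an operator `V`, as a continuous linear map on `End(H)`. -/
noncomputable def conjCLM {H : Type*} [NormedAddCommGroup H] [InnerProductSpace ℂ H]
    [FiniteDimensional ℂ H] (V : H →L[ℂ] H) :
    (H →L[ℂ] H) →L[ℂ] (H →L[ℂ] H) :=
  ContinuousLinearMap.mulLeftRight ℂ (H →L[ℂ] H) V (star V)

/-- The convex cone generated by a set `S` in a real vector space: the set of nonnegative
multiples of elements of the convex hull of `S`. -/
def coneGen {M : Type*} [AddCommMonoid M] [Module ℝ M] (S : Set M) : Set M :=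
  {x | ∃ r : ℝ, 0 ≤ r ∧ ∃ y ∈ convexHull ℝ S, x = r • y}


open NormedSpace Filter Topology

set_option maxHeartbeats 2000000
set_option synthInstance.maxHeartbeats 1000000

section ConeGen
variable {M : Type*} [AddCommGroup M] [Module ℝ M] {S : Set M}

lemma smul_mem_coneGen {x : M} (hx : x ∈ S) {r : ℝ} (hr : 0 ≤ r) : r • x ∈ coneGen S :=
  ⟨r, hr, x, subset_convexHull ℝ S hx, rfl⟩

lemma zero_mem_coneGen (hS : S.Nonempty) : (0 : M) ∈ coneGen S :=
  ⟨0, le_rfl, hS.choose, subset_convexHull ℝ S hS.choose_spec, (zero_smul ℝ _).symm⟩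

lemma add_mem_coneGen {x y : M} (hx : x ∈ coneGen S) (hy : y ∈ coneGen S) :
    x + y ∈ coneGen S := by
  obtain ⟨r, hr, u, hu, rfl⟩ := hx
  obtain ⟨s, hs, v, hv, rfl⟩ := hy
  rcases eq_or_lt_of_le (add_nonneg hr hs) with h | h
  · have hr0 : r = 0 := by linarith
    have hs0 : s = 0 := by linarith
    refine ⟨0, le_rfl, u, hu, by simp [hr0, hs0]⟩
  · refine ⟨r + s, h.le, (r / (r + s)) • u + (s / (r + s)) • v, ?_, ?_⟩
    · refine (convex_convexHull ℝ S) hu hv (by positivity) (by positivity) ?_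
      field_simp
    · rw [smul_add, smul_smul, smul_smul]
      have h0 : r + s ≠ 0 := ne_of_gt h
      field_simp

lemma sum_mem_coneGen {ι : Type*} (hS : S.Nonempty) (t : Finset ι) (f : ι → M)
    (hf : ∀ i ∈ t, f i ∈ coneGen S) : ∑ i ∈ t, f i ∈ coneGen S := by
  classical
  induction t using Finset.induction_on with
  | empty => simpa using zero_mem_coneGen hS
  | insert _ _ hnot ih =>
    rw [Finset.sum_insert hnot]
    exact add_mem_coneGen (hf _ (Finset.mem_insert_self _ _))
      (ih fun i hi => hf i (Finset.mem_insert_of_mem hi))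

end ConeGen


open NormedSpace Filter Topology

/-- A complex normed algebra is a rational normed algebra. -/
noncomputable def ratNormedAlgebraOfComplex {𝔸 : Type*} [NormedRing 𝔸] [NormedAlgebra ℂ 𝔸] :
    NormedAlgebra ℚ 𝔸 :=
  NormedAlgebra.restrictScalars ℚ ℂ 𝔸

attribute [local instance] ratNormedAlgebraOfComplex

section BanachAlg
variable {𝔸 : Type*} [NormedRing 𝔸] [NormedAlgebra ℂ 𝔸] [CompleteSpace 𝔸]

/-- The commutator superoperator `A ↦ Y A - A Y`. -/
noncomputable def adL (Y : 𝔸) : 𝔸 →L[ℂ] 𝔸 :=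
  ContinuousLinearMap.mul ℂ 𝔸 Y - (ContinuousLinearMap.mul ℂ 𝔸).flip Y

lemma adL_apply (Y A : 𝔸) : adL Y A = Y * A - A * Y := rfl

/-- Left multiplication as a ring hom into continuous linear maps. -/
noncomputable def mulLeftRingHom : 𝔸 →+* (𝔸 →L[ℂ] 𝔸) where
  toFun a := ContinuousLinearMap.mul ℂ 𝔸 a
  map_one' := by ext x; simp
  map_mul' a b := by ext x; simp [mul_assoc]
  map_zero' := by ext x; simp
  map_add' a b := by ext x; simp [add_mul]

/-- Right multiplication as a ring hom from the opposite algebra. -/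
noncomputable def mulRightRingHom : 𝔸ᵐᵒᵖ →+* (𝔸 →L[ℂ] 𝔸) where
  toFun a := (ContinuousLinearMap.mul ℂ 𝔸).flip a.unop
  map_one' := by ext x; simp
  map_mul' a b := by ext x; simp [mul_assoc]
  map_zero' := by ext x; simp
  map_add' a b := by ext x; simp [mul_add]

lemma exp_adL (Y : 𝔸) :
    NormedSpace.exp (adL Y) =
      ContinuousLinearMap.mulLeftRight ℂ 𝔸 (NormedSpace.exp Y) (NormedSpace.exp (-Y)) := by
  have h1 : adL Y = mulLeftRingHom Y + mulRightRingHom (MulOpposite.op (-Y)) := by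
    ext x
    simp [adL, mulLeftRingHom, mulRightRingHom, sub_eq_add_neg]
  have hcomm : Commute (mulLeftRingHom Y) (mulRightRingHom (MulOpposite.op (-Y))) := by
    ext x
    simp [mulLeftRingHom, mulRightRingHom, mul_assoc]
  have hcl : Continuous (mulLeftRingHom (𝔸 := 𝔸)) :=
    (ContinuousLinearMap.mul ℂ 𝔸).continuous
  have hcr : Continuous (mulRightRingHom (𝔸 := 𝔸)) :=
    ((ContinuousLinearMap.mul ℂ 𝔸).flip.continuous).comp MulOpposite.continuous_unop
  rw [h1, NormedSpace.exp_add_of_commute hcomm, ← NormedSpace.map_exp _ hcl,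
    ← NormedSpace.map_exp _ hcr, NormedSpace.exp_op]
  ext x
  simp [mulLeftRingHom, mulRightRingHom, mul_assoc]

end BanachAlg

open NormedSpace Filter Topology

section Limits
variable {𝔽 : Type*} [NormedRing 𝔽] [NormedAlgebra ℂ 𝔽] [CompleteSpace 𝔽]

lemma tendsto_slope_exp (D : 𝔽) :
    Tendsto (fun t : ℝ => t⁻¹ • (NormedSpace.exp (t • D) - 1)) (𝓝[≠] (0:ℝ)) (𝓝 D) := by
  have hd : HasDerivAt (fun t : ℝ => NormedSpace.exp (t • D))
      (NormedSpace.exp ((0:ℝ) • D) * D) 0 := hasDerivAt_exp_smul_const D 0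
  rw [zero_smul, NormedSpace.exp_zero, one_mul] at hd
  have := hasDerivAt_iff_tendsto_slope.mp hd
  refine this.congr fun t => ?_
  rw [slope_def_module]
  simp [zero_smul, NormedSpace.exp_zero]

lemma tendsto_sq_slope_exp (D : 𝔽) :
    Tendsto (fun u : ℝ => (u^2)⁻¹ • (NormedSpace.exp (u • D) + NormedSpace.exp (-(u • D)) - 2))
      (𝓝[≠] (0:ℝ)) (𝓝 (D * D)) := by
  have hneg : Tendsto (fun u : ℝ => -u) (𝓝[≠] (0:ℝ)) (𝓝[≠] (0:ℝ)) := by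
    rw [tendsto_nhdsWithin_iff]
    constructor
    · simpa using (tendsto_neg (0:ℝ)).mono_left nhdsWithin_le_nhds
    · filter_upwards [self_mem_nhdsWithin] with u hu
      simpa using hu
  have h2 : Tendsto (fun u : ℝ => u⁻¹ • (1 - NormedSpace.exp (-(u • D))))
      (𝓝[≠] (0:ℝ)) (𝓝 D) := by
    have := (tendsto_slope_exp D).comp hneg
    refine this.congr fun u => ?_
    simp only [Function.comp]
    rw [← neg_inv, neg_smul, ← smul_neg, neg_sub, neg_smul]
  have hprod := ((tendsto_slope_exp D).mul h2 : Tendsto _ _ (𝓝 (D * D)))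
  refine hprod.congr' ?_
  filter_upwards [self_mem_nhdsWithin] with u hu
  have hu' : (u:ℝ) ≠ 0 := hu
  have hmul : (u⁻¹ • (NormedSpace.exp (u • D) - 1)) * (u⁻¹ • (1 - NormedSpace.exp (-(u • D))))
      = (u⁻¹ * u⁻¹) • ((NormedSpace.exp (u • D) - 1) * (1 - NormedSpace.exp (-(u • D)))) :=
    smul_mul_smul_comm _ _ _ _
  have hexpmul : NormedSpace.exp (u • D) * NormedSpace.exp (-(u • D)) = 1 := by
    rw [← NormedSpace.exp_add_of_commute (Commute.refl (u • D)).neg_right, add_neg_cancel,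
      NormedSpace.exp_zero]
  have hfac : (NormedSpace.exp (u • D) - 1) * (1 - NormedSpace.exp (-(u • D)))
      = NormedSpace.exp (u • D) + NormedSpace.exp (-(u • D)) - 2 := by
    have : (2:𝔽) = 1 + 1 := by norm_num
    rw [sub_mul, mul_sub, mul_sub, one_mul, one_mul, mul_one, hexpmul, this]
    abel
  rw [hmul, hfac, ← mul_inv, ← sq]
end Limits

/-- If `𝒱` is a subgroup of the unitary group of `H` containing all
`exp(c₁X₁ + ⋯ + cₙXₙ)` with `Xⱼ` skewadjoint and `cⱼ ∈ ℝ`, then for all real `bʲ` and every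
positive semidefinite symmetric real matrix `[aʲᵏ]`, the superoperator
`𝔊(A) = Σⱼ bʲ [Xⱼ, A] + Σⱼₖ aʲᵏ ({XⱼXₖ, A} − 2XⱼAXₖ)` belongs to `C(𝒱)`, the closed convex
cone generated by `{A ↦ V A V* − A : V ∈ 𝒱}`. -/
theorem gaussian_generator_mem_cone
    {H : Type*} [NormedAddCommGroup H] [InnerProductSpace ℂ H] [FiniteDimensional ℂ H]
    (𝒱 : Set (H →L[ℂ] H))
    (hsub : 𝒱 ⊆ unitary (H →L[ℂ] H))
    (h1 : (1 : H →L[ℂ] H) ∈ 𝒱)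
    (hmul : ∀ v ∈ 𝒱, ∀ w ∈ 𝒱, v * w ∈ 𝒱)
    (hstar : ∀ v ∈ 𝒱, star v ∈ 𝒱)
    (n : ℕ) (X : Fin n → (H →L[ℂ] H))
    (hskew : ∀ j, star (X j) = -X j)
    (hexp : ∀ c : Fin n → ℝ, NormedSpace.exp (∑ j, c j • X j) ∈ 𝒱)
    (b : Fin n → ℝ) (a : Matrix (Fin n) (Fin n) ℝ)
    (hsymm : a.IsSymm) (hpos : a.PosSemidef) :
    ∃ T ∈ closure (coneGen
        {T | ∃ V ∈ 𝒱, T = conjCLM V - ContinuousLinearMap.id ℂ (H →L[ℂ] H)}),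
      ∀ A : H →L[ℂ] H,
        T A = (∑ j, b j • (X j * A - A * X j))
          + ∑ j, ∑ k, a j k •
              (X j * X k * A + A * (X j * X k) - 2 • (X j * A * X k)) := by
  classical
  haveI : CompleteSpace H := FiniteDimensional.complete ℂ H
  set S : Set ((H →L[ℂ] H) →L[ℂ] (H →L[ℂ] H)) :=
    {T | ∃ V ∈ 𝒱, T = conjCLM V - ContinuousLinearMap.id ℂ (H →L[ℂ] H)} with hSdef
  -- decomposition of the psd matrix
  obtain ⟨C, hC⟩ : ∃ C : Matrix (Fin n) (Fin n) ℝ, a = C.conjTranspose * C := by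
    open MatrixOrder in
    obtain ⟨C, hC1, -, hC2⟩ := CFC.exists_sqrt_of_isSelfAdjoint_of_quasispectrumRestricts
      hpos.isHermitian (QuasispectrumRestricts.nnreal_of_nonneg hpos.nonneg)
    exact ⟨C, by rw [← hC2, ← Matrix.star_eq_conjTranspose, hC1.star_eq]⟩
  have ha : ∀ j k, a j k = ∑ m, C m j * C m k := by
    intro j k
    rw [hC]
    simp [Matrix.mul_apply, Matrix.conjTranspose_apply]
  have hasym : ∀ j k, a j k = a k j := by
    intro j k
    rw [ha, ha]
    exact Finset.sum_congr rfl fun m _ => mul_comm _ _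
  set Y : Fin n → (H →L[ℂ] H) := fun m => ∑ j, C m j • X j with hY
  set B : (H →L[ℂ] H) := ∑ j, b j • X j with hB
  -- skew-adjointness of real combinations
  have hskewc : ∀ c : Fin n → ℝ, star (∑ j, c j • X j) = -(∑ j, c j • X j) := by
    intro c
    rw [star_sum, ← Finset.sum_neg_distrib]
    refine Finset.sum_congr rfl fun j _ => ?_
    rw [star_smul, hskew j, star_trivial, smul_neg]
  -- membership of generators
  have memS : ∀ c : Fin n → ℝ,
      NormedSpace.exp (adL (∑ j, c j • X j)) - 1 ∈ S := by
    intro c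
    refine ⟨NormedSpace.exp (∑ j, c j • X j), hexp c, ?_⟩
    rw [exp_adL]
    have : star (NormedSpace.exp (∑ j, c j • X j))
        = NormedSpace.exp (-(∑ j, c j • X j)) := by
      rw [NormedSpace.star_exp, hskewc]
    rw [conjCLM, this]
    rfl

  -- linearity of adL over real combinations
  have adL_linear : ∀ c : Fin n → ℝ,
      adL (∑ j, c j • X j) = ∑ j, c j • adL (X j) := by
    intro c
    unfold adL
    rw [map_sum, map_sum, ← Finset.sum_sub_distrib]
    refine Finset.sum_congr rfl fun j _ => ?_
    rw [ContinuousLinearMap.map_smul_of_tower, ContinuousLinearMap.map_smul_of_tower, smul_sub]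
  have hscale : ∀ (t : ℝ) (c : Fin n → ℝ),
      t • adL (∑ j, c j • X j) = adL (∑ j, (t * c j) • X j) := by
    intro t c
    rw [adL_linear, adL_linear, Finset.smul_sum]
    exact Finset.sum_congr rfl fun j _ => (smul_smul t (c j) _)
  -- the approximating family
  have hSne : S.Nonempty := ⟨_, memS 0⟩
  have hmem : ∀ t ∈ Set.Ioi (0:ℝ),
      (t⁻¹ • (NormedSpace.exp (t • adL B) - 1)
        + ∑ m, (t⁻¹ • (NormedSpace.exp (Real.sqrt t • adL (Y m)) - 1)
              + t⁻¹ • (NormedSpace.exp (-(Real.sqrt t • adL (Y m))) - 1))) ∈ coneGen S := by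
    intro t ht
    have ht' : (0:ℝ) < t := ht
    have hti : (0:ℝ) ≤ t⁻¹ := inv_nonneg.mpr ht'.le
    refine add_mem_coneGen ?_ (sum_mem_coneGen hSne _ _ fun m _ => add_mem_coneGen ?_ ?_)
    · rw [hB, hscale t b]
      exact smul_mem_coneGen (memS _) hti
    · simp only [hY]
      rw [hscale (Real.sqrt t) (C m)]
      exact smul_mem_coneGen (memS _) hti
    · simp only [hY]
      rw [← neg_smul, hscale (-Real.sqrt t) (C m)]
      exact smul_mem_coneGen (memS _) hti
  -- convergence
  have hmono : 𝓝[>] (0:ℝ) ≤ 𝓝[≠] (0:ℝ) :=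
    nhdsWithin_mono 0 fun x hx => ne_of_gt hx
  have hsqrt : Tendsto Real.sqrt (𝓝[>] (0:ℝ)) (𝓝[≠] (0:ℝ)) := by
    rw [tendsto_nhdsWithin_iff]
    constructor
    · have h0 : Tendsto Real.sqrt (𝓝 0) (𝓝 0) := by
        simpa using Real.continuous_sqrt.tendsto 0
      exact h0.mono_left nhdsWithin_le_nhds
    · filter_upwards [self_mem_nhdsWithin] with t ht
      exact ne_of_gt (Real.sqrt_pos.mpr ht)
  have t1 : Tendsto (fun t : ℝ => t⁻¹ • (NormedSpace.exp (t • adL B) - 1))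
      (𝓝[>] (0:ℝ)) (𝓝 (adL B)) :=
    (tendsto_slope_exp (adL B)).mono_left hmono
  have t2 : ∀ m, Tendsto (fun t : ℝ =>
        t⁻¹ • (NormedSpace.exp (Real.sqrt t • adL (Y m)) - 1)
          + t⁻¹ • (NormedSpace.exp (-(Real.sqrt t • adL (Y m))) - 1))
      (𝓝[>] (0:ℝ)) (𝓝 (adL (Y m) * adL (Y m))) := by
    intro m
    refine ((tendsto_sq_slope_exp (adL (Y m))).comp hsqrt).congr' ?_
    filter_upwards [self_mem_nhdsWithin] with t ht
    have h1 : Real.sqrt t ^ 2 = t := Real.sq_sqrt (le_of_lt ht)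
    simp only [Function.comp]
    rw [h1, ← smul_add]
    congr 1
    rw [show (2 : (H →L[ℂ] H) →L[ℂ] (H →L[ℂ] H)) = 1 + 1 from by norm_num]
    abel
  have htend : Tendsto (fun t : ℝ =>
      t⁻¹ • (NormedSpace.exp (t • adL B) - 1)
        + ∑ m, (t⁻¹ • (NormedSpace.exp (Real.sqrt t • adL (Y m)) - 1)
              + t⁻¹ • (NormedSpace.exp (-(Real.sqrt t • adL (Y m))) - 1)))
      (𝓝[>] (0:ℝ)) (𝓝 (adL B + ∑ m, adL (Y m) * adL (Y m))) :=
    t1.add (tendsto_finset_sum _ fun m _ => t2 m)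
  refine ⟨adL B + ∑ m, adL (Y m) * adL (Y m),
    mem_closure_of_tendsto htend ?_, ?_⟩
  · filter_upwards [self_mem_nhdsWithin] with t ht
    exact hmem t ht
  -- the algebraic identity
  intro A
  rw [ContinuousLinearMap.add_apply, ContinuousLinearMap.sum_apply]
  have expand : ∀ m, adL (Y m) * adL (Y m)
      = ∑ j, ∑ k, (C m j * C m k) • (adL (X j) * adL (X k)) := by
    intro m
    simp only [hY]
    rw [adL_linear, Finset.sum_mul]
    refine Finset.sum_congr rfl fun j _ => ?_
    rw [smul_mul_assoc, Finset.mul_sum, Finset.smul_sum]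
    refine Finset.sum_congr rfl fun k _ => ?_
    rw [mul_smul_comm, smul_smul]
  congr 1
  · rw [hB, adL_linear, ContinuousLinearMap.sum_apply]
    exact Finset.sum_congr rfl fun j _ => by
      rw [ContinuousLinearMap.smul_apply]; rfl
  · have hop : (∑ m, adL (Y m) * adL (Y m))
        = ∑ j, ∑ k, a j k • (adL (X j) * adL (X k)) := by
      calc ∑ m, adL (Y m) * adL (Y m)
          = ∑ m, ∑ j, ∑ k, (C m j * C m k) • (adL (X j) * adL (X k)) :=
            Finset.sum_congr rfl fun m _ => expand m
        _ = ∑ j, ∑ m, ∑ k, (C m j * C m k) • (adL (X j) * adL (X k)) := Finset.sum_comm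
        _ = ∑ j, ∑ k, ∑ m, (C m j * C m k) • (adL (X j) * adL (X k)) :=
            Finset.sum_congr rfl fun j _ => Finset.sum_comm
        _ = ∑ j, ∑ k, a j k • (adL (X j) * adL (X k)) := by
            refine Finset.sum_congr rfl fun j _ => Finset.sum_congr rfl fun k _ => ?_
            rw [← Finset.sum_smul, ← ha]
    have hsum2 : (∑ m, (adL (Y m) * adL (Y m)) A)
        = ∑ j, ∑ k, ((a j k • (adL (X j) * adL (X k))) A) := by
      rw [← ContinuousLinearMap.sum_apply, hop]
      simp only [ContinuousLinearMap.sum_apply]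
    rw [hsum2]
    have lhs_term : ∀ j k, (a j k • (adL (X j) * adL (X k))) A
        = (a j k • (X j * X k * A) + a j k • (A * (X k * X j)))
          - (a j k • (X j * A * X k) + a j k • (X k * A * X j)) := by
      intro j k
      rw [ContinuousLinearMap.smul_apply, ContinuousLinearMap.mul_apply, adL_apply, adL_apply]
      rw [show X j * (X k * A - A * X k) - (X k * A - A * X k) * X j
          = (X j * X k * A + A * (X k * X j)) - (X j * A * X k + X k * A * X j) from by
        noncomm_ring]
      rw [smul_sub, smul_add, smul_add]
    have rhs_term : ∀ j k, a j k • (X j * X k * A + A * (X j * X k) - 2 • (X j * A * X k))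
        = (a j k • (X j * X k * A) + a j k • (A * (X j * X k)))
          - (a j k • (X j * A * X k) + a j k • (X j * A * X k)) := by
      intro j k
      rw [two_smul, smul_sub, smul_add, smul_add]
    simp only [lhs_term, rhs_term]
    simp only [Finset.sum_sub_distrib, Finset.sum_add_distrib]
    have swap1 : (∑ j, ∑ k, a j k • (A * (X k * X j)))
        = ∑ j, ∑ k, a j k • (A * (X j * X k)) := by
      rw [Finset.sum_comm]
      exact Finset.sum_congr rfl fun k _ => Finset.sum_congr rfl fun j _ => by rw [hasym j k]
    have swap2 : (∑ j, ∑ k, a j k • (X k * A * X j))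
        = ∑ j, ∑ k, a j k • (X j * A * X k) := by
      rw [Finset.sum_comm]
      exact Finset.sum_congr rfl fun k _ => Finset.sum_congr rfl fun j _ => by rw [hasym j k]
    rw [swap1, swap2]
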